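/- Given a set partition K of {1,...,r} with l blocks (l ≤ n), the number of n-restricted q-set partitions of {1,...,r} whose underlying *-height sequence corresponds to K equals [n][n-1]···[n-l+1], where q is a prime power. -/

import Mathlib

open Finset

/-- Stirling numbers of the second kind: `stirling r l` counts set partitions of an
`r`-element set into `l` nonempty blocks. -/
def stirling : ℕ → ℕ → ℕ
  | 0, 0 => 1
  | 0, _ + 1 => 0
  | _ + 1, 0 => 0
  | r + 1, l + 1 => (l + 1) * stirling r (l + 1) + stirling r l

/-- The `r`-th Bell number. -/
def bell (r : ℕ) : ℕ := ∑ l ∈ Finset.range (r + 1), stirling r l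

/-- The q-integer `[i] = 1 + q + ... + q^(i-1)`. -/
def qint {R : Type*} [Semiring R] (q : R) (i : ℕ) : R := ∑ j ∈ Finset.range i, q ^ j

/-- The polynomial `d_{n,r}(q) = Σ_{l=1}^n S(r,l)·[n][n-1]···[n-l+1]`. -/
def dnr {R : Type*} [CommSemiring R] (n r : ℕ) (q : R) : R :=
  ∑ l ∈ Finset.Icc 1 n, (stirling r l : R) * ∏ j ∈ Finset.range l, qint q (n - j)

/-- The one-line notation of the permutation `w_a`: start with the word `(1,2,...,n)` and,
for each letter of `a` in turn, move it to the rightmost position.  This produces the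
rightmost occurrences of each value in the word `(1,...,n,a_1,...,a_r)`. -/
def waList (n : ℕ) (a : List ℕ) : List ℕ :=
  a.foldl (fun l x => l.erase x ++ [x]) (List.range' 1 n)

/-- The word associated with a sequence `a ∈ {1,...,n}^r` (values shifted to `1,...,n`). -/
def waWord {n r : ℕ} (a : Fin r → Fin n) : List ℕ := List.ofFn fun i => (a i : ℕ) + 1

/-- The inverse major index of a one-line word `l` with values `1,...,n`:
the sum of all `i` such that `i+1` occurs to the left of `i` (the backsteps). -/
def imajList (n : ℕ) (l : List ℕ) : ℕ :=
  ∑ i ∈ Finset.Icc 1 (n - 1), if l.idxOf (i + 1) < l.idxOf i then i else 0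

/-- The number of inversions of a permutation. -/
def invPerm {n : ℕ} (w : Equiv.Perm (Fin n)) : ℕ :=
  ((Finset.univ : Finset (Fin n × Fin n)).filter fun p => p.1 < p.2 ∧ w p.2 < w p.1).card

/-- The descent set of the one-line notation of `w` (zero-based positions). -/
def desSet {n : ℕ} (w : Equiv.Perm (Fin n)) : Finset ℕ :=
  (Finset.range (n - 1)).filter fun i =>
    ∃ h : i + 1 < n, w ⟨i + 1, h⟩ < w ⟨i, Nat.lt_of_succ_lt h⟩

/-- The backstep set of `w` (zero-based values): `i` such that the value `i+1` appears to
the left of the value `i` in one-line notation, i.e. its position `w⁻¹ (i+1)` is smaller. -/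
def bsSet {n : ℕ} (w : Equiv.Perm (Fin n)) : Finset ℕ :=
  (Finset.range (n - 1)).filter fun i =>
    ∃ h : i + 1 < n, w.symm ⟨i + 1, h⟩ < w.symm ⟨i, Nat.lt_of_succ_lt h⟩

/-- The set partition (as a finset of blocks) underlying a sequence `m`: `i ~ j` iff `m i = m j`. -/
def shapeFn {r : ℕ} {α : Type*} [DecidableEq α] (m : Fin r → α) : Finset (Finset (Fin r)) :=
  (Finset.univ.image m).image fun v => Finset.univ.filter fun i => m i = v

/-- `K` is a set partition of `{1,...,r}`: blocks are nonempty and every element lies in a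
unique block. -/
def isSetPartition {r : ℕ} (K : Finset (Finset (Fin r))) : Prop :=
  (∀ B ∈ K, B.Nonempty) ∧ ∀ i : Fin r, ∃! B, B ∈ K ∧ i ∈ B

instance {r : ℕ} : DecidablePred (isSetPartition (r := r)) := fun K => by
  unfold isSetPartition ExistsUnique; infer_instance

/-- Auxiliary computation of the ⋆-height: `m` records `1 + max` of the ⋆-heights so far. -/
def starAux : ℕ → List ℕ → List ℕ
  | _, [] => []
  | m, k :: ks => min k m :: starAux (max m (min k m + 1)) ks

/-- The ⋆-height `k*` of a sequence `k ∈ Z_n^r`: `k_1* = 0` and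
`k_j* = min(k_j, max(k_1*+1, ..., k_{j-1}*+1))`. -/
def starFn {n r : ℕ} (k : Fin r → Fin n) : Fin r → ℕ :=
  fun j => (starAux 0 (List.ofFn fun i => (k i : ℕ))).getD j 0

/-- `k_j - k_j*`, the number of free entries in column `j` of a `q`-set partition. -/
def qSetDiff {n r : ℕ} (k : Fin r → Fin n) (j : Fin r) : ℕ := (k j : ℕ) - starFn k j

/-- The root subgroup element `x_{ij}(a)`: identity matrix plus `a` in position `(i,j)`. -/
def xelt {F : Type*} [Field F] {n : ℕ} (i j : Fin n) (a : F) : Matrix (Fin n) (Fin n) F :=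
  1 + Matrix.single i j a

/-- The permutation matrix of `w`, with entry `1` in positions `(w l, l)`. -/
def permMat {F : Type*} [Field F] {n : ℕ} (w : Equiv.Perm (Fin n)) : Matrix (Fin n) (Fin n) F :=
  Matrix.of fun k l => if k = w l then 1 else 0

def macc : ℕ → List ℕ → ℕ
  | m, [] => m
  | m, x :: xs => macc (max m (x+1)) xs

lemma starAux_length (m : ℕ) (ks : List ℕ) : (starAux m ks).length = ks.length := by
  induction ks generalizing m with
  | nil => rfl
  | cons k ks ih => simp [starAux, ih]

lemma macc_append (m : ℕ) (xs : List ℕ) (x : ℕ) :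
    macc m (xs ++ [x]) = max (macc m xs) (x + 1) := by
  induction xs generalizing m with
  | nil => rfl
  | cons y ys ih => simp [macc, ih]

lemma le_macc (m : ℕ) (xs : List ℕ) : m ≤ macc m xs := by
  induction xs generalizing m with
  | nil => exact le_refl _
  | cons y ys ih => exact le_trans (le_max_left _ _) (ih _)

lemma starAux_eq_iff (ks ss : List ℕ) (m : ℕ) (hlen : ks.length = ss.length)
    (H : ∀ j (h : j < ss.length), ss[j] ≤ macc m (ss.take j)) :
    starAux m ks = ss ↔ ∀ j (h : j < ss.length),
      if ss[j] = macc m (ss.take j) then ss[j] ≤ ks[j]'(by omega) else ks[j]'(by omega) = ss[j] := by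
  induction ks generalizing ss m with
  | nil =>
    cases ss with
    | nil => simp [starAux]
    | cons s ss => simp at hlen
  | cons k ks ih =>
    cases ss with
    | nil => simp at hlen
    | cons s0 ss =>
      have hs0 : s0 ≤ m := by exact H 0 (by simp)
      have hhead : (min k m = s0) ↔ (if s0 = m then s0 ≤ k else k = s0) := by
        split
        · next h => subst h; omega
        · next h => omega
      constructor
      · intro heq j hj
        simp only [starAux, List.cons.injEq] at heq
        obtain ⟨h0, htail⟩ := heq
        match j with
        | 0 =>
          simpa [macc] using hhead.mp h0
        | j+1 =>
          have hm' : max m (min k m + 1) = macc m [s0] := by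
            simp [macc, h0]
          rw [hm'] at htail
          have := (ih ss (macc m [s0]) (by simpa using hlen)
            (fun i hi => by exact H (i+1) (by simpa using hi))).mp htail j (by simpa using hj)
          exact this
      · intro hcond
        have h0 : min k m = s0 := by
          apply hhead.mpr
          exact hcond 0 (by simp)
        simp only [starAux, List.cons.injEq]
        refine ⟨h0, ?_⟩
        have hm' : max m (min k m + 1) = macc m [s0] := by simp [macc, h0]
        rw [hm']
        apply (ih ss (macc m [s0]) (by simpa using hlen)
          (fun i hi => by exact H (i+1) (by simpa using hi))).mpr
        intro j hj
        have := hcond (j+1) (by simpa using hj)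
        exact this

lemma starAux_le_macc (ks : List ℕ) (m : ℕ) (j : ℕ) (hj : j < (starAux m ks).length) :
    (starAux m ks)[j] ≤ macc m ((starAux m ks).take j) := by
  induction ks generalizing m j with
  | nil => simp [starAux] at hj
  | cons k ks ih =>
    match j with
    | 0 => simpa [starAux, macc] using min_le_right k m
    | j+1 =>
      have hj' : j < (starAux (max m (min k m + 1)) ks).length := by
        simpa [starAux] using hj
      have := ih (max m (min k m + 1)) j hj'
      simpa [starAux, macc, List.take_succ_cons] using this

lemma starAux_toFinset_take (ks : List ℕ) (m : ℕ) (i : ℕ) :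
    ((starAux m ks).take i).toFinset ∪ Finset.range m
      = Finset.range (macc m ((starAux m ks).take i)) := by
  induction ks generalizing m i with
  | nil => simp [starAux, macc]
  | cons k ks ih =>
    match i with
    | 0 => simp [macc]
    | i+1 =>
      have hkm : min k m ≤ m := min_le_right _ _
      have hstep : {min k m} ∪ Finset.range m = Finset.range (max m (min k m + 1)) := by
        ext x
        simp only [Finset.mem_union, Finset.mem_singleton, Finset.mem_range]
        omega
      calc ((starAux m (k :: ks)).take (i+1)).toFinset ∪ Finset.range m
          = ((starAux (max m (min k m + 1)) ks).take i).toFinset ∪ ({min k m} ∪ Finset.range m) := by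
            simp [starAux, List.take_succ_cons, List.toFinset_cons]
        _ = ((starAux (max m (min k m + 1)) ks).take i).toFinset ∪ Finset.range (max m (min k m + 1)) := by rw [hstep]
        _ = Finset.range (macc m ((starAux m (k :: ks)).take (i+1))) := by
            rw [ih]
            simp [starAux, List.take_succ_cons, macc]

lemma starAux_first_occ (ks : List ℕ) (f j : ℕ) (hf : f < (starAux 0 ks).length)
    (hj : j < (starAux 0 ks).length)
    (heq : (starAux 0 ks)[f] = (starAux 0 ks)[j])
    (hfirst : ∀ i (hi : i < f), (starAux 0 ks)[i]'(by omega) ≠ (starAux 0 ks)[j]) :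
    (starAux 0 ks)[j] = (((starAux 0 ks).take f).toFinset).card := by
  set t := starAux 0 ks with ht
  have hle : t[f] ≤ macc 0 (t.take f) := starAux_le_macc ks 0 f hf
  have hfin : (t.take f).toFinset = Finset.range (macc 0 (t.take f)) := by
    have := starAux_toFinset_take ks 0 f
    simpa using this
  have hfm : t[f] = macc 0 (t.take f) := by
    rcases lt_or_eq_of_le hle with h | h
    · exfalso
      have hmem : t[f] ∈ (t.take f).toFinset := by
        rw [hfin]; simpa using h
      rw [List.mem_toFinset] at hmem
      obtain ⟨i, hi, hit⟩ := List.mem_iff_getElem.mp hmem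
      have hilen : i < f := by simp at hi; omega
      have hgt : (List.take f t)[i] = t[i]'(by simp at hi; omega) := List.getElem_take ..
      exact hfirst i hilen (by rw [← heq, ← hit, hgt])
    · exact h
  rw [← heq, hfm, hfin]
  simp


section Part
variable {r : ℕ} (K : Finset (Finset (Fin r))) (hK : isSetPartition K)

def blkP (j : Fin r) : Finset (Fin r) := K.choose (fun B => j ∈ B) (hK.2 j)

lemma blkP_mem (j : Fin r) : blkP K hK j ∈ K := Finset.choose_mem _ _ _

lemma mem_blkP_self (j : Fin r) : j ∈ blkP K hK j :=
  Finset.choose_property (fun B => j ∈ B) K (hK.2 j)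

lemma blkP_eq_of_mem {j : Fin r} {B : Finset (Fin r)} (hB : B ∈ K) (hj : j ∈ B) :
    blkP K hK j = B :=
  (hK.2 j).unique ⟨blkP_mem K hK j, mem_blkP_self K hK j⟩ ⟨hB, hj⟩

lemma mem_blkP_iff {i j : Fin r} : i ∈ blkP K hK j ↔ blkP K hK i = blkP K hK j := by
  constructor
  · intro h; exact blkP_eq_of_mem K hK (blkP_mem K hK j) h
  · intro h; rw [← h]; exact mem_blkP_self K hK i

def moP (j : Fin r) : Fin r := (blkP K hK j).min' ⟨j, mem_blkP_self K hK j⟩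

lemma moP_mem (j : Fin r) : moP K hK j ∈ blkP K hK j := Finset.min'_mem _ _

lemma moP_le (j : Fin r) : moP K hK j ≤ j := Finset.min'_le _ _ (mem_blkP_self K hK j)

lemma moP_le' {i j : Fin r} (hi : i ∈ blkP K hK j) : moP K hK j ≤ i := Finset.min'_le _ _ hi

lemma blkP_moP (j : Fin r) : blkP K hK (moP K hK j) = blkP K hK j :=
  blkP_eq_of_mem K hK (blkP_mem K hK j) (moP_mem K hK j)

lemma moP_moP (j : Fin r) : moP K hK (moP K hK j) = moP K hK j := by
  unfold moP
  congr 1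
  exact blkP_moP K hK j

def nbP (t : ℕ) : ℕ := (K.filter fun B => ∃ i : Fin r, i ∈ B ∧ (i : ℕ) < t).card

def sP (j : Fin r) : ℕ := nbP K (moP K hK j)

lemma nbP_mono {t t' : ℕ} (h : t ≤ t') : nbP K t ≤ nbP K t' := by
  unfold nbP
  apply Finset.card_le_card
  intro B hB
  simp only [Finset.mem_filter] at hB ⊢
  obtain ⟨hBK, i, hi, hit⟩ := hB
  exact ⟨hBK, i, hi, by omega⟩

lemma nbP_zero : nbP K 0 = 0 := by
  unfold nbP
  rw [Finset.card_eq_zero, Finset.filter_eq_empty_iff]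
  intro B _
  rintro ⟨i, _, hi⟩
  omega

lemma blkP_not_mem_filter (j : Fin r) :
    blkP K hK j ∉ K.filter fun B => ∃ i : Fin r, i ∈ B ∧ (i : ℕ) < (moP K hK j : ℕ) := by
  simp only [Finset.mem_filter, not_and, not_exists]
  intro _ i hi
  have := moP_le' K hK hi
  simp only [not_lt]
  exact_mod_cast this

lemma nbP_succ (j : Fin r) :
    nbP K ((j : ℕ) + 1) = if moP K hK j = j then nbP K (j : ℕ) + 1 else nbP K (j : ℕ) := by
  split
  · next hm =>
    unfold nbP
    have hset : (K.filter fun B => ∃ i : Fin r, i ∈ B ∧ (i : ℕ) < (j : ℕ) + 1)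
        = insert (blkP K hK j) (K.filter fun B => ∃ i : Fin r, i ∈ B ∧ (i : ℕ) < (j : ℕ)) := by
      ext B
      simp only [Finset.mem_filter, Finset.mem_insert]
      constructor
      · rintro ⟨hB, i, hi, hit⟩
        rcases lt_or_eq_of_le (Nat.lt_succ_iff.mp hit) with h | h
        · exact Or.inr ⟨hB, i, hi, h⟩
        · left
          have : i = j := Fin.ext h
          subst this
          exact (blkP_eq_of_mem K hK hB hi).symm
      · rintro (rfl | ⟨hB, i, hi, hit⟩)
        · exact ⟨blkP_mem K hK j, j, mem_blkP_self K hK j, by omega⟩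
        · exact ⟨hB, i, hi, by omega⟩
    rw [hset, Finset.card_insert_of_notMem]
    have := blkP_not_mem_filter K hK j
    rw [hm] at this
    exact this
  · next hm =>
    have hlt : (moP K hK j : ℕ) < (j : ℕ) := by
      have := moP_le K hK j
      rcases lt_or_eq_of_le this with h | h
      · exact_mod_cast h
      · exact absurd h hm
    unfold nbP
    congr 1
    ext B
    simp only [Finset.mem_filter]
    constructor
    · rintro ⟨hB, i, hi, hit⟩
      refine ⟨hB, ?_⟩
      rcases lt_or_eq_of_le (Nat.lt_succ_iff.mp hit) with h | h
      · exact ⟨i, hi, h⟩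
      · have hij : i = j := Fin.ext h
        have hBj : blkP K hK j = B := blkP_eq_of_mem K hK hB (hij ▸ hi)
        exact ⟨moP K hK j, hBj ▸ moP_mem K hK j, hlt⟩
    · rintro ⟨hB, i, hi, hit⟩
      exact ⟨hB, i, hi, by omega⟩

lemma sP_lt_of_ne (j : Fin r) (hm : moP K hK j ≠ j) : sP K hK j < nbP K (j : ℕ) := by
  have hlt : (moP K hK j : ℕ) < (j : ℕ) := by
    have := moP_le K hK j
    rcases lt_or_eq_of_le this with h | h
    · exact_mod_cast h
    · exact absurd h hm
  unfold sP nbP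
  apply Finset.card_lt_card
  constructor
  · intro B hB
    simp only [Finset.mem_filter] at hB ⊢
    obtain ⟨hBK, i, hi, hit⟩ := hB
    exact ⟨hBK, i, hi, by omega⟩
  · intro hsub
    have hmem : blkP K hK j ∈ K.filter fun B => ∃ i : Fin r, i ∈ B ∧ (i : ℕ) < (j : ℕ) := by
      simp only [Finset.mem_filter]
      exact ⟨blkP_mem K hK j, moP K hK j, moP_mem K hK j, hlt⟩
    exact blkP_not_mem_filter K hK j (hsub hmem)

lemma sP_le_nbP (j : Fin r) : sP K hK j ≤ nbP K (j : ℕ) :=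
  nbP_mono K (by exact_mod_cast moP_le K hK j)

lemma sP_eq_iff (j : Fin r) : sP K hK j = nbP K (j : ℕ) ↔ moP K hK j = j := by
  constructor
  · intro h
    by_contra hm
    exact absurd h (Nat.ne_of_lt (sP_lt_of_ne K hK j hm))
  · intro h
    unfold sP
    rw [h]

lemma nbP_top (hps : isSetPartition K) : nbP K (r : ℕ) = K.card := by
  unfold nbP
  congr 1
  rw [Finset.filter_eq_self]
  intro B hB
  obtain ⟨i, hi⟩ := hps.1 B hB
  exact ⟨i, hi, i.isLt⟩

lemma sP_lt_card (j : Fin r) : sP K hK j < K.card := by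
  have h1 : sP K hK j < nbP K ((j : ℕ) + 1) := by
    rw [nbP_succ K hK j]
    split
    · next h => rw [(sP_eq_iff K hK j).mpr h]; omega
    · next h => exact lt_of_lt_of_le (sP_lt_of_ne K hK j h) (nbP_mono K (by omega))
  calc sP K hK j < nbP K ((j : ℕ) + 1) := h1
    _ ≤ nbP K r := nbP_mono K (by omega)
    _ = K.card := nbP_top K hK

lemma maccP : ∀ jn : ℕ, jn ≤ r → macc 0 ((List.ofFn (sP K hK)).take jn) = nbP K jn := by
  intro jn
  induction jn with
  | zero => intro _; simpa [macc] using (nbP_zero K).symm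
  | succ j ih =>
    intro hj
    have hj' : j < r := by omega
    have htake : (List.ofFn (sP K hK)).take (j + 1)
        = (List.ofFn (sP K hK)).take j ++ [sP K hK ⟨j, hj'⟩] := by
      rw [List.take_succ]
      congr 1
      have : (List.ofFn (sP K hK))[j]? = some (sP K hK ⟨j, hj'⟩) := by
        rw [List.getElem?_eq_getElem (by simpa using hj')]
        simp
      rw [this]
      rfl
    rw [htake, macc_append, ih (by omega)]
    have := nbP_succ K hK ⟨j, hj'⟩
    simp only [Fin.val_mk] at this
    rw [this]
    split
    · next h =>
      have : sP K hK ⟨j, hj'⟩ = nbP K j := by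
        have := (sP_eq_iff K hK ⟨j, hj'⟩).mpr h
        simpa using this
      omega
    · next h =>
      have := sP_lt_of_ne K hK ⟨j, hj'⟩ h
      simp only [Fin.val_mk] at this
      omega

end Part


section Char
variable {r n : ℕ} (K : Finset (Finset (Fin r))) (hK : isSetPartition K)

lemma starFn_getElem (k : Fin r → Fin n) (j : ℕ) (hj : j < r) :
    starFn k ⟨j, hj⟩ = (starAux 0 (List.ofFn fun i => (k i : ℕ)))[j]'
      (by rw [starAux_length]; simpa using hj) := by
  unfold starFn
  rw [List.getD_eq_getElem]

lemma star_eq_sP_iff (k : Fin r → Fin n) :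
    starFn k = sP K hK ↔ ∀ j : Fin r,
      (if moP K hK j = j then sP K hK j ≤ (k j : ℕ) else (k j : ℕ) = sP K hK j) := by
  set lk := List.ofFn fun i => ((k i : ℕ)) with hlk
  set ls := List.ofFn (sP K hK) with hls
  have hlenk : lk.length = r := by simp [hlk]
  have hlens : ls.length = r := by simp [hls]
  have hlen : lk.length = ls.length := by omega
  have hmacc : ∀ i : ℕ, i ≤ r → macc 0 (ls.take i) = nbP K i := maccP K hK
  have H : ∀ j (h : j < ls.length), ls[j] ≤ macc 0 (ls.take j) := by
    intro j h
    have hj : j < r := by omega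
    rw [hmacc j (by omega)]
    have : ls[j] = sP K hK ⟨j, hj⟩ := by simp [hls]
    rw [this]
    exact sP_le_nbP K hK ⟨j, hj⟩
  have hA : starFn k = sP K hK ↔ starAux 0 lk = ls := by
    constructor
    · intro h
      apply List.ext_getElem (by rw [starAux_length]; omega)
      intro i h1 h2
      have hi : i < r := by omega
      have := starFn_getElem k i hi
      rw [← this, h]
      simp [hls]
    · intro h
      funext j
      have := starFn_getElem (n := n) k j j.isLt
      rw [Fin.eta] at this
      rw [this]
      have : (starAux 0 lk)[(j:ℕ)]'(by rw [starAux_length, hlenk]; exact j.isLt) = ls[(j:ℕ)]'(by omega) := by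
        congr 1
      rw [this]
      simp [hls]
  rw [hA, starAux_eq_iff lk ls 0 hlen H]
  constructor
  · intro h j
    have hj : (j : ℕ) < ls.length := by omega
    have := h j hj
    rw [hmacc j (by omega)] at this
    have e1 : ls[(j:ℕ)] = sP K hK j := by simp [hls]
    have e2 : lk[(j:ℕ)]'(by omega) = (k j : ℕ) := by simp [hlk]
    rw [e1, e2] at this
    by_cases hmo : moP K hK j = j
    · rw [if_pos ((sP_eq_iff K hK j).mpr hmo)] at this
      rw [if_pos hmo]
      exact this
    · rw [if_neg (fun hh => hmo ((sP_eq_iff K hK j).mp hh))] at this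
      rw [if_neg hmo]
      exact this
  · intro h j hj
    have hjr : j < r := by omega
    have := h ⟨j, hjr⟩
    rw [hmacc j (by omega)]
    have e1 : ls[j] = sP K hK ⟨j, hjr⟩ := by simp [hls]
    have e2 : lk[j]'(by omega) = (k ⟨j, hjr⟩ : ℕ) := by simp [hlk]
    rw [e1, e2]
    by_cases hmo : moP K hK ⟨j, hjr⟩ = ⟨j, hjr⟩
    · rw [if_pos ((sP_eq_iff K hK ⟨j, hjr⟩).mpr hmo)]
      rw [if_pos hmo] at this
      exact this
    · rw [if_neg (fun hh => hmo ((sP_eq_iff K hK ⟨j, hjr⟩).mp hh))]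
      rw [if_neg hmo] at this
      exact this

lemma sP_moP (j : Fin r) : sP K hK (moP K hK j) = sP K hK j := by
  unfold sP
  rw [moP_moP]

lemma sP_lt_min {i j : Fin r} (hi : moP K hK i = i) (hj : moP K hK j = j) (hij : i < j) :
    sP K hK i < sP K hK j := by
  have e1 : sP K hK i = nbP K (i : ℕ) := (sP_eq_iff K hK i).mpr hi
  have e2 : sP K hK j = nbP K (j : ℕ) := (sP_eq_iff K hK j).mpr hj
  have h3 : nbP K ((i : ℕ) + 1) = nbP K (i : ℕ) + 1 := by
    rw [nbP_succ K hK i, if_pos hi]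
  have h4 : nbP K ((i : ℕ) + 1) ≤ nbP K (j : ℕ) := nbP_mono K (by exact_mod_cast hij)
  omega

lemma sP_min_inj {i j : Fin r} (hi : moP K hK i = i) (hj : moP K hK j = j)
    (h : sP K hK i = sP K hK j) : i = j := by
  rcases lt_trichotomy i j with hlt | heq | hgt
  · exact absurd h (Nat.ne_of_lt (sP_lt_min K hK hi hj hlt))
  · exact heq
  · exact absurd h.symm (Nat.ne_of_lt (sP_lt_min K hK hj hi hgt))

lemma sP_eq_iff_blk {i j : Fin r} :
    sP K hK i = sP K hK j ↔ blkP K hK i = blkP K hK j := by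
  constructor
  · intro h
    have h2 : sP K hK (moP K hK i) = sP K hK (moP K hK j) := by
      rw [sP_moP, sP_moP, h]
    have hmo : moP K hK i = moP K hK j :=
      sP_min_inj K hK (moP_moP K hK i) (moP_moP K hK j) h2
    calc blkP K hK i = blkP K hK (moP K hK i) := (blkP_moP K hK i).symm
      _ = blkP K hK (moP K hK j) := by rw [hmo]
      _ = blkP K hK j := blkP_moP K hK j
  · intro h
    have hmo : moP K hK i = moP K hK j := by
      unfold moP
      simp only [h]
    unfold sP
    rw [hmo]

lemma sP_fiber (j : Fin r) :
    (Finset.univ.filter fun i => sP K hK i = sP K hK j) = blkP K hK j := by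
  ext i
  simp only [Finset.mem_filter, Finset.mem_univ, true_and]
  rw [sP_eq_iff_blk K hK, ← mem_blkP_iff K hK]

lemma shape_sP : shapeFn (sP K hK) = K := by
  ext B
  unfold shapeFn
  simp only [Finset.mem_image, Finset.mem_univ, true_and, exists_exists_eq_and]
  constructor
  · rintro ⟨j, rfl⟩
    rw [sP_fiber K hK j]
    exact blkP_mem K hK j
  · intro hB
    obtain ⟨j, hj⟩ := hK.1 B hB
    refine ⟨j, ?_⟩
    rw [sP_fiber K hK j]
    exact (blkP_eq_of_mem K hK hB hj)

end Char

section Char2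
variable {r n : ℕ} (K : Finset (Finset (Fin r))) (hK : isSetPartition K)

lemma star_fiber (k : Fin r → Fin n) (h : shapeFn (starFn k) = K) (j : Fin r) :
    (Finset.univ.filter fun i => starFn k i = starFn k j) = blkP K hK j := by
  have hmem : (Finset.univ.filter fun i => starFn k i = starFn k j) ∈ K := by
    rw [← h]
    unfold shapeFn
    simp only [Finset.mem_image, Finset.mem_univ, true_and, exists_exists_eq_and]
    exact ⟨j, rfl⟩
  have hj : j ∈ (Finset.univ.filter fun i => starFn k i = starFn k j) := by
    simp
  exact (blkP_eq_of_mem K hK hmem hj).symm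

lemma starFn_mem_iff (k : Fin r → Fin n) (h : shapeFn (starFn k) = K) (i j : Fin r) :
    starFn k i = starFn k j ↔ i ∈ blkP K hK j := by
  rw [← star_fiber K hK k h j]
  simp

lemma card_fiber_eq_nb (hps : isSetPartition K) (k : Fin r → Fin n)
    (h : shapeFn (starFn k) = K) (f : ℕ) (hf : f ≤ r) :
    (((starAux 0 (List.ofFn fun i => (k i : ℕ))).take f).toFinset).card = nbP K f := by
  set lt := starAux 0 (List.ofFn fun i => ((k i : ℕ))) with hlt
  have hlen : lt.length = r := by rw [hlt, starAux_length]; simp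
  have himg : (lt.take f).toFinset
      = (Finset.univ.filter fun i : Fin r => (i : ℕ) < f).image (starFn k) := by
    ext v
    simp only [List.mem_toFinset, Finset.mem_image, Finset.mem_filter, Finset.mem_univ, true_and]
    rw [List.mem_iff_getElem]
    constructor
    · rintro ⟨i, hi, hv⟩
      have hif : i < f := by simp at hi; omega
      have hir : i < r := by omega
      refine ⟨⟨i, hir⟩, hif, ?_⟩
      rw [starFn_getElem k i hir, ← hv]
      exact (List.getElem_take ..).symm
    · rintro ⟨i, hif, hv⟩
      refine ⟨(i : ℕ), by simp [hlen]; omega, ?_⟩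
      rw [List.getElem_take, ← starFn_getElem k i i.isLt]
      rw [Fin.eta]
      exact hv
  rw [himg]
  unfold nbP
  apply Finset.card_bij (fun v _ => Finset.univ.filter fun i => starFn k i = v)
  · intro v hv
    simp only [Finset.mem_image, Finset.mem_filter, Finset.mem_univ, true_and] at hv
    obtain ⟨i0, hi0f, rfl⟩ := hv
    rw [star_fiber K hps k h i0]
    simp only [Finset.mem_filter]
    exact ⟨blkP_mem K hps i0, i0, mem_blkP_self K hps i0, hi0f⟩
  · intro v hv v' hv' heq
    simp only [Finset.mem_image, Finset.mem_filter, Finset.mem_univ, true_and] at hv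
    obtain ⟨i0, hi0f, rfl⟩ := hv
    have : i0 ∈ Finset.univ.filter fun i => starFn k i = v' := by
      rw [← heq]; simp
    simpa using this
  · intro B hB
    simp only [Finset.mem_filter] at hB
    obtain ⟨hBK, i0, hi0B, hi0f⟩ := hB
    refine ⟨starFn k i0, ?_, ?_⟩
    · simp only [Finset.mem_image, Finset.mem_filter, Finset.mem_univ, true_and]
      exact ⟨i0, hi0f, rfl⟩
    · rw [star_fiber K hps k h i0]
      exact blkP_eq_of_mem K hps hBK hi0B

lemma star_eq_sP_of_shape (k : Fin r → Fin n) (h : shapeFn (starFn k) = K) :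
    starFn k = sP K hK := by
  funext j
  set lt := starAux 0 (List.ofFn fun i => ((k i : ℕ))) with hlt
  have hlen : lt.length = r := by rw [hlt, starAux_length]; simp
  have hmo : (moP K hK j : ℕ) ≤ (j : ℕ) := by exact_mod_cast moP_le K hK j
  have hfr : (moP K hK j : ℕ) < r := (moP K hK j).isLt
  have hfj : lt[(moP K hK j : ℕ)]'(by omega) = lt[(j : ℕ)]'(by omega) := by
    rw [← starFn_getElem k _ hfr, ← starFn_getElem k _ j.isLt, Fin.eta, Fin.eta]
    exact (starFn_mem_iff K hK k h _ j).mpr (moP_mem K hK j)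
  have hfirst : ∀ i (hi : i < (moP K hK j : ℕ)), lt[i]'(by omega) ≠ lt[(j:ℕ)]'(by omega) := by
    intro i hi
    have hir : i < r := by omega
    rw [← starFn_getElem k i hir, ← starFn_getElem k _ j.isLt, Fin.eta]
    intro heq
    have h1 := (starFn_mem_iff K hK k h ⟨i, hir⟩ j).mp heq
    have h2 := moP_le' K hK h1
    have h3 : (moP K hK j : ℕ) ≤ i := by exact_mod_cast h2
    omega
  have hR := starAux_first_occ (List.ofFn fun i => ((k i : ℕ))) (moP K hK j) (j : ℕ)
    (by rw [starAux_length]; simpa using hfr) (by rw [starAux_length]; simpa using j.isLt)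
    hfj hfirst
  have hcard := card_fiber_eq_nb K hK k h (moP K hK j) (by omega)
  have e : starFn k j = lt[(j:ℕ)]'(by omega) := by
    have := starFn_getElem k (j : ℕ) j.isLt
    rw [Fin.eta] at this
    exact this
  rw [e, hR]
  exact hcard

lemma shape_star_iff (k : Fin r → Fin n) :
    shapeFn (starFn k) = K ↔ starFn k = sP K hK := by
  constructor
  · exact star_eq_sP_of_shape K hK k
  · intro h; rw [h]; exact shape_sP K hK

end Char2


lemma qsum_fin (q c n : ℕ) (hcn : c < n) :
    (∑ x ∈ Finset.univ.filter (fun x : Fin n => c ≤ (x : ℕ)), q ^ ((x : ℕ) - c))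
      = qint q (n - c) := by
  rw [show qint q (n - c) = ∑ d ∈ Finset.range (n - c), q ^ d from rfl]
  rw [Finset.sum_filter]
  rw [Fin.sum_univ_eq_sum_range (fun m : ℕ => if c ≤ m then q ^ (m - c) else 0) n]
  rw [← Finset.sum_filter]
  refine Finset.sum_nbij' (fun m : ℕ => m - c) (fun d : ℕ => c + d) ?_ ?_ ?_ ?_ ?_
  · intro x hx
    simp only [Finset.mem_filter, Finset.mem_range] at hx
    simp only [Finset.mem_range]
    omega
  · intro d hd
    simp only [Finset.mem_range] at hd
    simp only [Finset.mem_filter, Finset.mem_range]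
    omega
  · intro x hx
    simp only [Finset.mem_filter, Finset.mem_range] at hx
    show c + (x - c) = x
    omega
  · intro d hd
    simp only [Finset.mem_range] at hd
    show (c + d) - c = d
    omega
  · intro x hx
    rfl


/-- the number of `n`-restricted `q`-set partitions of `{1,...,r}` whose
⋆-height sequence corresponds to a fixed set partition `K` with `l ≤ n` blocks is
`[n][n-1]···[n-l+1]`, where `q = |F|` is a prime power. -/
theorem stmt12 (F : Type*) [Field F] [Fintype F] (n r l : ℕ) (K : Finset (Finset (Fin r)))
    (hK : isSetPartition K) (hl : K.card = l) (hln : l ≤ n) :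
    Fintype.card (Σ k : {k : Fin r → Fin n // shapeFn (starFn k) = K},
        ∀ j : Fin r, Fin (qSetDiff k.1 j) → F) =
      ∏ j ∈ Finset.range l, qint (Fintype.card F) (n - j) := by
  classical
  set q := Fintype.card F with hq
  set A : Fin r → Finset (Fin n) := fun j =>
    if moP K hK j = j then (Finset.univ.filter fun x : Fin n => sP K hK j ≤ (x : ℕ))
    else (Finset.univ.filter fun x : Fin n => (x : ℕ) = sP K hK j) with hA
  have hcardpi : ∀ k : Fin r → Fin n,
      Fintype.card (∀ j : Fin r, Fin (qSetDiff k j) → F) = ∏ j : Fin r, q ^ (qSetDiff k j) := by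
    intro k
    rw [Fintype.card_pi]
    congr 1
    funext j
    rw [Fintype.card_fun]
    simp [hq]
  rw [Fintype.card_sigma]
  have step1 : ∑ k : {k : Fin r → Fin n // shapeFn (starFn k) = K},
      Fintype.card (∀ j : Fin r, Fin (qSetDiff k.1 j) → F)
      = ∑ k ∈ Finset.univ.filter (fun k : Fin r → Fin n => shapeFn (starFn k) = K),
          ∏ j : Fin r, q ^ (qSetDiff k j) := by
    have e1 : (∑ k : {k : Fin r → Fin n // shapeFn (starFn k) = K},
        Fintype.card (∀ j : Fin r, Fin (qSetDiff k.1 j) → F))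
        = ∑ k : {k : Fin r → Fin n // shapeFn (starFn k) = K}, ∏ j : Fin r, q ^ (qSetDiff k.1 j) :=
      Finset.sum_congr rfl fun k _ => hcardpi k.1
    rw [e1]
    exact (Finset.sum_subtype (Finset.univ.filter fun k : Fin r → Fin n => shapeFn (starFn k) = K)
      (by intro x; simp) (fun k => ∏ j : Fin r, q ^ (qSetDiff k j))).symm
  rw [step1]
  have hfilter : (Finset.univ.filter fun k : Fin r → Fin n => shapeFn (starFn k) = K)
      = Fintype.piFinset A := by
    ext k
    simp only [Finset.mem_filter, Finset.mem_univ, true_and, Fintype.mem_piFinset]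
    rw [shape_star_iff K hK, star_eq_sP_iff K hK]
    apply forall_congr'
    intro j
    by_cases hmo : moP K hK j = j
    · simp only [hA, if_pos hmo, Finset.mem_filter, Finset.mem_univ, true_and]
    · simp only [hA, if_neg hmo, Finset.mem_filter, Finset.mem_univ, true_and]
  have step2 : ∑ k ∈ Finset.univ.filter (fun k : Fin r → Fin n => shapeFn (starFn k) = K),
      ∏ j : Fin r, q ^ (qSetDiff k j)
      = ∑ k ∈ Fintype.piFinset A, ∏ j : Fin r, q ^ ((k j : ℕ) - sP K hK j) := by
    rw [hfilter]
    apply Finset.sum_congr rfl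
    intro k hk
    have hstar : starFn k = sP K hK := by
      rw [star_eq_sP_iff K hK]
      intro j
      have hkj := Fintype.mem_piFinset.mp hk j
      by_cases hmo : moP K hK j = j
      · rw [if_pos hmo]
        rw [hA] at hkj
        simp only [if_pos hmo, Finset.mem_filter] at hkj
        exact hkj.2
      · rw [if_neg hmo]
        rw [hA] at hkj
        simp only [if_neg hmo, Finset.mem_filter] at hkj
        exact hkj.2
    apply Finset.prod_congr rfl
    intro j _
    unfold qSetDiff
    rw [hstar]
  rw [step2]
  have step3 : ∑ k ∈ Fintype.piFinset A, ∏ j : Fin r, q ^ ((k j : ℕ) - sP K hK j)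
      = ∏ j : Fin r, ∑ x ∈ A j, q ^ ((x : ℕ) - sP K hK j) :=
    (Finset.prod_univ_sum A fun j x => q ^ ((x : ℕ) - sP K hK j)).symm
  rw [step3]
  have hsum : ∀ j : Fin r, (∑ x ∈ A j, q ^ ((x : ℕ) - sP K hK j))
      = if moP K hK j = j then qint q (n - sP K hK j) else 1 := by
    intro j
    have hcn : sP K hK j < n := lt_of_lt_of_le (hl ▸ sP_lt_card K hK j) hln
    set c := sP K hK j with hc
    by_cases hmo : moP K hK j = j
    · rw [if_pos hmo, hA]
      simp only [if_pos hmo]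
      exact qsum_fin q c n hcn
    · rw [if_neg hmo, hA]
      simp only [if_neg hmo]
      have hsing : (Finset.univ.filter fun x : Fin n => (x : ℕ) = c) = {(⟨c, hcn⟩ : Fin n)} := by
        ext x
        simp only [Finset.mem_filter, Finset.mem_univ, true_and, Finset.mem_singleton]
        rw [Fin.ext_iff]
      rw [hsing, Finset.sum_singleton]
      simp
  have e2 : (∏ j : Fin r, ∑ x ∈ A j, q ^ ((x : ℕ) - sP K hK j))
      = ∏ j : Fin r, (if moP K hK j = j then qint q (n - sP K hK j) else 1) :=
    Finset.prod_congr rfl fun j _ => hsum j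
  rw [e2]
  rw [← Finset.prod_filter]
  set M := Finset.univ.filter fun j : Fin r => moP K hK j = j with hM
  have hMcard : M.card = l := by
    rw [← hl]
    apply Finset.card_bij (fun j _ => blkP K hK j)
    · intro j _
      exact blkP_mem K hK j
    · intro j hj j' hj' heq
      simp only [hM, Finset.mem_filter, Finset.mem_univ, true_and] at hj hj'
      have : moP K hK j = moP K hK j' := by
        unfold moP
        simp only [heq]
      rw [hj, hj'] at this
      exact this
    · intro B hB
      obtain ⟨i0, hi0⟩ := hK.1 B hB
      set j := B.min' ⟨i0, hi0⟩ with hj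
      have hjB : j ∈ B := Finset.min'_mem _ _
      have hblk : blkP K hK j = B := blkP_eq_of_mem K hK hB hjB
      refine ⟨j, ?_, hblk⟩
      simp only [hM, Finset.mem_filter, Finset.mem_univ, true_and]
      unfold moP
      simp only [hblk]
      rfl
  have hinj : ∀ x ∈ M, ∀ y ∈ M, sP K hK x = sP K hK y → x = y := by
    intro x hx y hy hxy
    simp only [hM, Finset.mem_filter, Finset.mem_univ, true_and] at hx hy
    exact sP_min_inj K hK hx hy hxy
  have himg : M.image (sP K hK) = Finset.range l := by
    apply Finset.eq_of_subset_of_card_le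
    · intro v hv
      simp only [Finset.mem_image] at hv
      obtain ⟨j, _, rfl⟩ := hv
      simp only [Finset.mem_range]
      exact hl ▸ sP_lt_card K hK j
    · rw [Finset.card_range, ← hMcard]
      exact le_of_eq (Finset.card_image_of_injOn hinj).symm
  calc ∏ j ∈ M, qint q (n - sP K hK j)
      = ∏ v ∈ M.image (sP K hK), qint q (n - v) := (Finset.prod_image (f := fun v => qint q (n - v)) hinj).symm
    _ = ∏ v ∈ Finset.range l, qint q (n - v) := by rw [himg]
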